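/- If q is not a root of unity (so [k]_q ≠ 0 for all k ≥ 1), then any iterative q-difference operator on R satisfies δ^{(k)} = (1/[k]_q!)(δ^{(1)})^k for all k ∈ ℕ; conversely, defining δ^{(k)} by this formula from δ^{(1)} = (1/((q-1)t))(σ_q - id) yields an iterative q-difference operator. -/

import Mathlib

/-- The Gaussian (q-)binomial coefficient, defined by the q-Pascal recursion. -/
def qBinom {K : Type*} [CommRing K] (q : K) : ℕ → ℕ → K
  | _, 0 => 1
  | 0, _ + 1 => 0
  | n + 1, k + 1 => qBinom q n k + q ^ (k + 1) * qBinom q n (k + 1)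

/-- The q-integer `[k]_q = 1 + q + ⋯ + q^(k-1)`. -/
def qInt {K : Type*} [CommRing K] (q : K) (k : ℕ) : K := ∑ i ∈ Finset.range k, q ^ i

/-- The q-factorial `[k]_q! = [k]_q [k-1]_q ⋯ [1]_q`. -/
def qFact {K : Type*} [CommRing K] (q : K) : ℕ → K
  | 0 => 1
  | n + 1 => qFact q n * qInt q (n + 1)

section

variable {C R : Type*} [Field C] [CommRing R] [Algebra C R]
variable (q : C) (t : Rˣ) (σ : R ≃+* R)

/-- Axioms (1)–(5) of Hardouin's Definition 2.4: `δ*` is an iterative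
q-difference operator on `R` (relative to `σ_q` and `t`). -/
def IsIterQDiffOp (δ : ℕ → R → R) : Prop :=
  (∀ x, δ 0 x = x)
  ∧ (∀ x, δ 1 x = algebraMap C R (q - 1)⁻¹ * (↑t⁻¹ : R) * (σ x - x))
  ∧ (∀ k x y, δ k (x + y) = δ k x + δ k y)
  ∧ (∀ k x y, δ k (x * y)
      = ∑ i ∈ Finset.range (k + 1), (⇑σ)^[i] (δ (k - i) x) * δ i y)
  ∧ (∀ i j x, δ i (δ j x) = algebraMap C R (qBinom q (i + j) i) * δ (i + j) x)

section ScalarLemmas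

variable {K : Type*} [CommRing K] (q : K)

lemma qBinom_zero (n : ℕ) : qBinom q n 0 = 1 := by cases n <;> rfl

lemma qInt_succ (n : ℕ) : qInt q (n + 1) = qInt q n + q ^ n := Finset.sum_range_succ _ _

lemma qInt_succ' (n : ℕ) : qInt q (n + 1) = 1 + q * qInt q n := by
  rw [qInt, geom_sum_succ, ← qInt]; ring

lemma qInt_add (a b : ℕ) : qInt q (a + b) = qInt q a + q ^ a * qInt q b := by
  induction b with
  | zero => simp [qInt]
  | succ c ih =>
    rw [show a + (c+1) = (a+c) + 1 by omega, qInt_succ, ih, qInt_succ]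
    ring

lemma qBinom_eq_zero_of_lt : ∀ {n k : ℕ}, n < k → qBinom q n k = 0 := by
  intro n
  induction n with
  | zero => intro k h; cases k with
    | zero => omega
    | succ m => rfl
  | succ m ih =>
    intro k h
    cases k with
    | zero => omega
    | succ j =>
      show qBinom q m j + q ^ (j+1) * qBinom q m (j+1) = 0
      rw [ih (by omega), ih (by omega)]
      ring

lemma qBinom_one : ∀ n : ℕ, qBinom q n 1 = qInt q n := by
  intro n
  induction n with
  | zero => simp [qInt]; rfl
  | succ m ih =>
    show qBinom q m 0 + q ^ 1 * qBinom q m 1 = _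
    rw [qBinom_zero, ih, qInt_succ']
    ring

lemma qBinom_mul_qFact : ∀ a b : ℕ, qBinom q (a + b) a * (qFact q a * qFact q b) = qFact q (a + b) := by
  intro a
  induction a with
  | zero => intro b; simp [qBinom_zero, show qFact q 0 = 1 from rfl]
  | succ m ih =>
    intro b
    induction b with
    | zero =>
      show (qBinom q m m + q^(m+1) * qBinom q m (m+1)) * (qFact q (m+1) * qFact q 0) = qFact q (m+1)
      rw [(qBinom_eq_zero_of_lt q (Nat.lt_succ_self m) : qBinom q m (m+1) = 0)]
      have h0 := ih 0
      simp only [Nat.add_zero, show qFact q 0 = 1 from rfl, mul_one] at h0 ⊢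
      rw [show qFact q (m+1) = qFact q m * qInt q (m+1) from rfl]
      linear_combination qInt q (m+1) * h0
    | succ c ihb =>
      rw [show m + 1 + (c + 1) = (m + (c+1)) + 1 by omega]
      show (qBinom q (m + (c+1)) m + q^(m+1) * qBinom q (m + (c+1)) (m+1)) * _ = _
      have h1 := ih (c + 1)
      have h2 : qBinom q (m + (c+1)) (m+1) * (qFact q (m+1) * qFact q c) = qFact q (m + (c+1)) := by
        rw [show m + (c+1) = m + 1 + c by omega]; exact ihb
      have f2 : qFact q (m + 1) = qFact q m * qInt q (m+1) := rfl
      have f3 : qFact q (c + 1) = qFact q c * qInt q (c+1) := rfl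
      have f4 : qInt q (m + (c+1) + 1) = qInt q (m+1) + q^(m+1) * qInt q (c+1) := by
        rw [show m + (c+1) + 1 = (m+1) + (c+1) by omega, qInt_add]
      rw [show qFact q (m + (c+1) + 1) = qFact q (m + (c+1)) * qInt q (m + (c+1) + 1) from rfl, f4]
      linear_combination qInt q (m+1) * h1 + q^(m+1) * qInt q (c+1) * h2 +
        qBinom q (m + (c+1)) m * qFact q (c+1) * f2 +
        q^(m+1) * qBinom q (m + (c+1)) (m+1) * qFact q (m+1) * f3


end ScalarLemmas

def Dop : R → R := fun y => algebraMap C R (q - 1)⁻¹ * (↑t⁻¹ : R) * (σ y - y)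

lemma Dop_add (x y : R) : Dop q t σ (x + y) = Dop q t σ x + Dop q t σ y := by
  simp only [Dop, map_add]; ring

lemma Dop_iter_add (k : ℕ) (x y : R) :
    (Dop q t σ)^[k] (x + y) = (Dop q t σ)^[k] x + (Dop q t σ)^[k] y := by
  induction k with
  | zero => rfl
  | succ n ih => simp only [Function.iterate_succ_apply', ih, Dop_add]

lemma Dop_sum {ι : Type*} (s : Finset ι) (f : ι → R) :
    Dop q t σ (∑ i ∈ s, f i) = ∑ i ∈ s, Dop q t σ (f i) := by
  classical
  induction s using Finset.induction with
  | empty => simp [Dop]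
  | insert _ _ h ih => rw [Finset.sum_insert h, Finset.sum_insert h, Dop_add, ih]

variable (hσC : ∀ c : C, σ (algebraMap C R c) = algebraMap C R c)
variable (hσt : σ (t : R) = algebraMap C R q * t)

include hσC in
lemma sigma_const_mul (c : C) (y : R) :
    σ (algebraMap C R c * y) = algebraMap C R c * σ y := by rw [map_mul, hσC]

include hσC in
lemma sigma_iter_const_mul (i : ℕ) (c : C) (y : R) :
    (⇑σ)^[i] (algebraMap C R c * y) = algebraMap C R c * (⇑σ)^[i] y := by
  induction i with
  | zero => rfl
  | succ n ih => simp only [Function.iterate_succ_apply', ih, sigma_const_mul σ hσC]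

include hσC in
lemma Dop_const_mul (c : C) (y : R) :
    Dop q t σ (algebraMap C R c * y) = algebraMap C R c * Dop q t σ y := by
  simp only [Dop, sigma_const_mul σ hσC]; ring

include hσC in
lemma Dop_iter_const_mul (k : ℕ) (c : C) (y : R) :
    (Dop q t σ)^[k] (algebraMap C R c * y) = algebraMap C R c * (Dop q t σ)^[k] y := by
  induction k with
  | zero => rfl
  | succ n ih => simp only [Function.iterate_succ_apply', ih, Dop_const_mul q t σ hσC]

include hσt in
lemma sigma_tinv (hq0 : q ≠ 0) : σ (↑t⁻¹ : R) = algebraMap C R q⁻¹ * ↑t⁻¹ := by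
  have h2 : (algebraMap C R q * ↑t) * σ (↑t⁻¹ : R) = 1 := by
    rw [← hσt, ← map_mul, Units.mul_inv, map_one]
  calc σ (↑t⁻¹ : R)
      = (algebraMap C R q⁻¹ * algebraMap C R q) * ((↑t⁻¹ : R) * ↑t) * σ (↑t⁻¹ : R) := by
        rw [← map_mul, inv_mul_cancel₀ hq0, map_one, one_mul, Units.inv_mul, one_mul]
    _ = algebraMap C R q⁻¹ * ↑t⁻¹ * ((algebraMap C R q * ↑t) * σ (↑t⁻¹ : R)) := by ring
    _ = algebraMap C R q⁻¹ * ↑t⁻¹ := by rw [h2, mul_one]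

include hσt hσC in
lemma Dop_sigma (hq0 : q ≠ 0) (z : R) :
    Dop q t σ (σ z) = algebraMap C R q * σ (Dop q t σ z) := by
  simp only [Dop, map_mul, map_sub, hσC, sigma_tinv q t σ hσt hq0]
  have h : algebraMap C R q * algebraMap C R q⁻¹ = 1 := by
    rw [← map_mul, mul_inv_cancel₀ hq0, map_one]
  linear_combination (-(algebraMap C R (q-1)⁻¹ * (↑t⁻¹ : R) * (σ (σ z) - σ z))) * h

include hσt hσC in
lemma Dop_sigma_iter (hq0 : q ≠ 0) (i : ℕ) (z : R) :
    Dop q t σ ((⇑σ)^[i] z) = algebraMap C R (q ^ i) * (⇑σ)^[i] (Dop q t σ z) := by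
  induction i with
  | zero => simp
  | succ n ih =>
    rw [Function.iterate_succ_apply', Dop_sigma q t σ hσC hσt hq0,
      ih, sigma_const_mul σ hσC, ← mul_assoc, ← map_mul, ← pow_succ',
      Function.iterate_succ_apply']

lemma Dop_mul (x y : R) : Dop q t σ (x * y) = σ x * Dop q t σ y + Dop q t σ x * y := by
  simp only [Dop, map_mul]; ring

include hσC hσt in
lemma Dop_iter_mul (hq0 : q ≠ 0) : ∀ (k : ℕ) (x y : R),
    (Dop q t σ)^[k] (x * y) = ∑ i ∈ Finset.range (k + 1),
      algebraMap C R (qBinom q k i) *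
        ((⇑σ)^[i] ((Dop q t σ)^[k - i] x) * (Dop q t σ)^[i] y) := by
  intro k
  induction k with
  | zero => intro x y; simp [qBinom_zero]
  | succ k ih =>
    intro x y
    rw [Function.iterate_succ_apply', ih, Dop_sum]
    have hterm : ∀ i ∈ Finset.range (k+1),
        Dop q t σ (algebraMap C R (qBinom q k i) *
            ((⇑σ)^[i] ((Dop q t σ)^[k-i] x) * (Dop q t σ)^[i] y))
        = algebraMap C R (qBinom q k i) *
            ((⇑σ)^[i+1] ((Dop q t σ)^[k-i] x) * (Dop q t σ)^[i+1] y)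
          + algebraMap C R (q ^ i * qBinom q k i) *
            ((⇑σ)^[i] ((Dop q t σ)^[k+1-i] x) * (Dop q t σ)^[i] y) := by
      intro i hi
      rw [Finset.mem_range] at hi
      rw [Dop_const_mul q t σ hσC, Dop_mul, Dop_sigma_iter q t σ hσC hσt hq0,
        show k + 1 - i = (k - i) + 1 by omega,
        Function.iterate_succ_apply' (Dop q t σ) (k-i) x,
        Function.iterate_succ_apply' (⇑σ) i,
        Function.iterate_succ_apply' (Dop q t σ) i y, map_mul]
      ring
    rw [Finset.sum_congr rfl hterm, Finset.sum_add_distrib]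
    have e2 := Finset.sum_range_succ' (fun i => algebraMap C R (q ^ i * qBinom q k i) *
      ((⇑σ)^[i] ((Dop q t σ)^[k+1-i] x) * (Dop q t σ)^[i] y)) k
    have e3 := Finset.sum_range_succ (fun i => algebraMap C R (q ^ (i+1) * qBinom q k (i+1)) *
      ((⇑σ)^[i+1] ((Dop q t σ)^[k+1-(i+1)] x) * (Dop q t σ)^[i+1] y)) k
    have e4 := Finset.sum_range_succ' (fun i => algebraMap C R (qBinom q (k+1) i) *
      ((⇑σ)^[i] ((Dop q t σ)^[k+1-i] x) * (Dop q t σ)^[i] y)) (k+1)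
    rw [e2, e4]
    have hz : algebraMap C R (q ^ (k+1) * qBinom q k (k+1)) *
        ((⇑σ)^[k+1] ((Dop q t σ)^[k+1-(k+1)] x) * (Dop q t σ)^[k+1] y) = 0 := by
      rw [qBinom_eq_zero_of_lt q (Nat.lt_succ_self k), mul_zero, map_zero, zero_mul]
    rw [hz, add_zero] at e3
    rw [← e3]
    have h0 : algebraMap C R (q ^ 0 * qBinom q k 0) *
          ((⇑σ)^[0] ((Dop q t σ)^[k+1-0] x) * (Dop q t σ)^[0] y)
        = algebraMap C R (qBinom q (k+1) 0) *
          ((⇑σ)^[0] ((Dop q t σ)^[k+1-0] x) * (Dop q t σ)^[0] y) := by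
      rw [qBinom_zero, qBinom_zero, pow_zero, one_mul]
    rw [h0, ← add_assoc]
    congr 1
    rw [← Finset.sum_add_distrib]
    apply Finset.sum_congr rfl
    intro i hi
    rw [Nat.succ_sub_succ,
      show qBinom q (k+1) (i+1) = qBinom q k i + q^(i+1) * qBinom q k (i+1) from rfl,
      map_add, map_mul]
    ring


lemma cancelC (c : C) (hc : c ≠ 0) {x y : R} (h : algebraMap C R c * x = y) :
    x = algebraMap C R c⁻¹ * y := by
  rw [← h, ← mul_assoc, ← map_mul, inv_mul_cancel₀ hc, map_one, one_mul]

lemma qInt_ne_zero' {C : Type*} [Field C] {q : C} (hqroot : ∀ n : ℕ, 0 < n → q ^ n ≠ 1) :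
    ∀ k : ℕ, 0 < k → qInt q k ≠ 0 := by
  intro k hk h
  have hg : qInt q k * (q - 1) = q ^ k - 1 := geom_sum_mul q k
  rw [h, zero_mul] at hg
  exact hqroot k hk (by linear_combination -hg)

lemma qFact_ne_zero' {C : Type*} [Field C] {q : C} (hqroot : ∀ n : ℕ, 0 < n → q ^ n ≠ 1) :
    ∀ k : ℕ, qFact q k ≠ 0 := by
  intro k
  induction k with
  | zero => exact one_ne_zero
  | succ n ih =>
    exact mul_ne_zero ih (qInt_ne_zero' hqroot (n+1) (Nat.succ_pos n))

/-- If `q` is not a root of unity (so `[k]_q ≠ 0` for all `k ≥ 1`), then any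
iterative q-difference operator on `R` satisfies `δ^(k) = (1/[k]_q!) (δ^(1))^k`;
conversely, defining `δ^(k)` by this formula from
`δ^(1) = (1/((q-1)t))(σ_q - id)` yields an iterative q-difference operator. -/
theorem iterQDiffOp_of_not_rootOfUnity
    (hq0 : q ≠ 0) (hq1 : q ≠ 1)
    (hqroot : ∀ n : ℕ, 0 < n → q ^ n ≠ 1)
    (hσC : ∀ c : C, σ (algebraMap C R c) = algebraMap C R c)
    (hσt : σ (t : R) = algebraMap C R q * t) :
    (∀ δ : ℕ → R → R, IsIterQDiffOp q t σ δ →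
      ∀ k x, δ k x = algebraMap C R (qFact q k)⁻¹ *
        (fun y => algebraMap C R (q - 1)⁻¹ * (↑t⁻¹ : R) * (σ y - y))^[k] x)
    ∧ (∀ δ : ℕ → R → R,
        (∀ k x, δ k x = algebraMap C R (qFact q k)⁻¹ *
          (fun y => algebraMap C R (q - 1)⁻¹ * (↑t⁻¹ : R) * (σ y - y))^[k] x) →
        IsIterQDiffOp q t σ δ) := by
  have hDop : (fun y => algebraMap C R (q - 1)⁻¹ * (↑t⁻¹ : R) * (σ y - y)) = Dop q t σ := rfl
  have hF1 : qFact q 1 = 1 := by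
    show qFact q 0 * qInt q 1 = 1
    show 1 * qInt q 1 = 1
    rw [one_mul, qInt, Finset.sum_range_one, pow_zero]
  have hqF := qFact_ne_zero' hqroot
  have hqI := qInt_ne_zero' hqroot
  constructor
  · intro δ hδ
    obtain ⟨h0, h1, h3, h4, h5⟩ := hδ
    intro k
    induction k with
    | zero =>
      intro x
      rw [h0, hDop, show qFact q 0 = 1 from rfl, inv_one, map_one, one_mul,
        Function.iterate_zero_apply]
    | succ k ihk =>
      intro x
      rw [hDop] at ihk ⊢
      have step : algebraMap C R (qInt q (1 + k)) * δ (1 + k) x = Dop q t σ (δ k x) := by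
        rw [← qBinom_one, ← h5 1 k x, h1]
        rfl
      have l2 : Dop q t σ (δ k x) = algebraMap C R (qFact q k)⁻¹ * (Dop q t σ)^[k+1] x := by
        rw [ihk x, Dop_const_mul q t σ hσC, ← Function.iterate_succ_apply' (Dop q t σ) k x]
      rw [l2] at step
      have hne : qInt q (1 + k) ≠ 0 := hqI (1+k) (by omega)
      have h6 := cancelC (qInt q (1+k)) hne step
      rw [show (1:ℕ)+k = k+1 by omega] at h6
      rw [h6, ← mul_assoc, ← map_mul]
      congr 2
      rw [show qFact q (k+1) = qFact q k * qInt q (k+1) from rfl, mul_inv]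
      ring
  · intro δ hδ
    refine ⟨?_, ?_, ?_, ?_, ?_⟩
    · intro x
      rw [hδ 0 x, show qFact q 0 = 1 from rfl, inv_one, map_one, one_mul,
        Function.iterate_zero_apply]
    · intro x
      rw [hδ 1 x, hF1, inv_one, map_one, one_mul, Function.iterate_one]
    · intro k x y
      rw [hδ k (x+y), hδ k x, hδ k y, hDop, Dop_iter_add, mul_add]
    · intro k x y
      rw [hδ k (x*y), hDop, Dop_iter_mul q t σ hσC hσt hq0 k x y, Finset.mul_sum]
      apply Finset.sum_congr rfl
      intro i hi
      rw [Finset.mem_range] at hi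
      have hik : i ≤ k := by omega
      rw [hδ (k-i) x, hδ i y, hDop, sigma_iter_const_mul σ hσC]
      have key := qBinom_mul_qFact q i (k - i)
      rw [Nat.add_sub_cancel' hik] at key
      have hc : (qFact q k)⁻¹ * qBinom q k i = (qFact q (k-i))⁻¹ * (qFact q i)⁻¹ := by
        have n1 := hqF k
        have n2 := hqF i
        have n3 := hqF (k-i)
        field_simp
        linear_combination key
      have hc2 := congrArg (algebraMap C R) hc
      rw [map_mul, map_mul] at hc2
      linear_combination ((⇑σ)^[i] ((Dop q t σ)^[k-i] x) * (Dop q t σ)^[i] y) * hc2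
    · intro i j x
      rw [hδ j x, hδ (i+j) x, hδ i _, hDop, Dop_iter_const_mul q t σ hσC,
        ← Function.iterate_add_apply]
      have key := qBinom_mul_qFact q i j
      have hc : (qFact q i)⁻¹ * (qFact q j)⁻¹ = qBinom q (i+j) i * (qFact q (i+j))⁻¹ := by
        have n1 := hqF (i+j)
        have n2 := hqF i
        have n3 := hqF j
        field_simp
        linear_combination -key
      have hc2 := congrArg (algebraMap C R) hc
      rw [map_mul, map_mul] at hc2
      linear_combination ((Dop q t σ)^[i+j] x) * hc2

end
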